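/- Let u, v ∈ K with u ≠ v, u + ρqv ≠ 0 and v + ρqu ≠ 0, and for 1 ≤ i ≤ n−1 set T_i(u,v) := T_i + ((q − q^{−1})u/(v − u))·1 + ((q − q^{−1})u/(u + ρqv))·E_i in B_{d,n}. Then T_i(u,v)·T_i(v,u) = ((u − q²v)(u − q^{−2}v)/(u − v)²)·1. -/

import Mathlib

open scoped BigOperators

/-- The cyclotomic Birman–Murakami–Wenzl algebra data: elements of a `K`-algebra `A`
satisfying the defining relations of `B_{d,n}`. -/
structure CBMW (K : Type*) [Field K] (A : Type*) [Ring A] [Algebra K A]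
    (d n : ℕ) (δ : ℕ → K) (ρ q : K) (v : Fin d → K) where
  T : ℕ → A
  Tinv : ℕ → A
  X₁ : A
  X₁inv : A
  E : ℕ → A
  rho_ne : ρ ≠ 0
  q_ne : q ≠ 0
  qq_ne : q - q⁻¹ ≠ 0
  v_ne : ∀ i, v i ≠ 0
  param : ρ - ρ⁻¹ = (q - q⁻¹) * (δ 0 - 1)
  TTinv : ∀ i, 1 ≤ i → i ≤ n - 1 → T i * Tinv i = 1
  TinvT : ∀ i, 1 ≤ i → i ≤ n - 1 → Tinv i * T i = 1
  XXinv : X₁ * X₁inv = 1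
  XinvX : X₁inv * X₁ = 1
  Esq : ∀ i, 1 ≤ i → i ≤ n - 1 → E i * E i = δ 0 • E i
  braid : ∀ i, 1 ≤ i → i + 1 ≤ n - 1 → T i * T (i + 1) * T i = T (i + 1) * T i * T (i + 1)
  Tcomm : ∀ i j, 1 ≤ i → j ≤ n - 1 → i + 2 ≤ j → T i * T j = T j * T i
  XTXT : 1 ≤ n - 1 → X₁ * T 1 * X₁ * T 1 = T 1 * X₁ * T 1 * X₁
  XTcomm : ∀ j, 2 ≤ j → j ≤ n - 1 → X₁ * T j = T j * X₁
  EEEup : ∀ i, 1 ≤ i → i + 1 ≤ n - 1 → E i * E (i + 1) * E i = E i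
  EEEdown : ∀ i, 1 ≤ i → i + 1 ≤ n - 1 → E (i + 1) * E i * E (i + 1) = E (i + 1)
  TTEup : ∀ i, 1 ≤ i → i + 1 ≤ n - 1 → T i * T (i + 1) * E i = E (i + 1) * E i
  TTEdown : ∀ i, 1 ≤ i → i + 1 ≤ n - 1 → T (i + 1) * T i * E (i + 1) = E i * E (i + 1)
  ETTup : ∀ i, 1 ≤ i → i + 1 ≤ n - 1 → E i * T (i + 1) * T i = E i * E (i + 1)
  ETTdown : ∀ i, 1 ≤ i → i + 1 ≤ n - 1 → E (i + 1) * T i * T (i + 1) = E (i + 1) * E i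
  EXE : ∀ j, 1 ≤ j → j ≤ d - 1 → E 1 * X₁ ^ j * E 1 = δ j • E 1
  skein : ∀ i, 1 ≤ i → i ≤ n - 1 → T i - Tinv i = (q - q⁻¹) • (1 - E i)
  TE : ∀ i, 1 ≤ i → i ≤ n - 1 → T i * E i = ρ⁻¹ • E i
  ET : ∀ i, 1 ≤ i → i ≤ n - 1 → E i * T i = ρ⁻¹ • E i
  unwrapl : 1 ≤ n - 1 → E 1 * X₁ * T 1 * X₁ = ρ • E 1
  unwrapr : 1 ≤ n - 1 → X₁ * T 1 * X₁ * E 1 = ρ • E 1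
  cyclo : (List.ofFn fun i : Fin d => X₁ - algebraMap K A (v i)).prod = 0

variable {K : Type*} [Field K] {A : Type*} [Ring A] [Algebra K A]
  {d n : ℕ} {δ : ℕ → K} {ρ q : K} {v : Fin d → K}

/-- The Jucys–Murphy elements `X_1, X_2, …` of the cyclotomic BMW algebra,
defined by `X_{i+1} = T_i X_i T_i` (with the convention `X 0 = 1`). -/
def CBMW.X (B : CBMW K A d n δ ρ q v) : ℕ → A
  | 0 => 1
  | 1 => B.X₁
  | k + 2 => B.T (k + 1) * CBMW.X B (k + 1) * B.T (k + 1)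

/-- the Baxterized elements `T_i(u,v)` satisfy
`T_i(u,v) T_i(v,u) = ((u - q²v)(u - q⁻²v)/(u - v)²) · 1`. -/
theorem cbmw_baxterized_inverse
    {K : Type*} [Field K] {A : Type*} [Ring A] [Algebra K A]
    {d n : ℕ} {δ : ℕ → K} {ρ q : K} {vv : Fin d → K}
    (B : CBMW K A d n δ ρ q vv)
    (i : ℕ) (hi1 : 1 ≤ i) (hin : i ≤ n - 1)
    (u v : K) (huv : u ≠ v) (h1 : u + ρ * q * v ≠ 0) (h2 : v + ρ * q * u ≠ 0) :
    (B.T i + ((q - q⁻¹) * u / (v - u)) • (1 : A) + ((q - q⁻¹) * u / (u + ρ * q * v)) • B.E i) *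
      (B.T i + ((q - q⁻¹) * v / (u - v)) • (1 : A) + ((q - q⁻¹) * v / (v + ρ * q * u)) • B.E i)
      = ((u - q ^ 2 * v) * (u - (q⁻¹) ^ 2 * v) / (u - v) ^ 2) • (1 : A) := by
  have hrho := B.rho_ne
  have hq := B.q_ne
  have hc0 := B.qq_ne
  have hparam := B.param
  have hvu : v - u ≠ 0 := sub_ne_zero.mpr (Ne.symm huv)
  have huv' : u - v ≠ 0 := sub_ne_zero.mpr huv
  have hee := B.Esq i hi1 hin
  have hte := B.TE i hi1 hin
  have het := B.ET i hi1 hin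
  have htt : B.T i * B.T i
      = 1 + (q - q⁻¹) • B.T i - ((q - q⁻¹) * ρ⁻¹) • B.E i := by
    have h' : B.T i * (B.T i - B.Tinv i) = B.T i * ((q - q⁻¹) • (1 - B.E i)) := by
      rw [B.skein i hi1 hin]
    rw [mul_sub, B.TTinv i hi1 hin, mul_smul_comm, mul_sub, mul_one, hte] at h'
    have h'' : B.T i * B.T i = 1 + (q - q⁻¹) • (B.T i - ρ⁻¹ • B.E i) := by
      rw [← h']; abel
    rw [h'']; rw [smul_sub, smul_smul]; abel
  have expand : (B.T i + ((q - q⁻¹) * u / (v - u)) • (1 : A)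
        + ((q - q⁻¹) * u / (u + ρ * q * v)) • B.E i) *
      (B.T i + ((q - q⁻¹) * v / (u - v)) • (1 : A)
        + ((q - q⁻¹) * v / (v + ρ * q * u)) • B.E i)
      = (1 + ((q - q⁻¹) * u / (v - u)) * ((q - q⁻¹) * v / (u - v))) • (1 : A)
        + ((q - q⁻¹) + ((q - q⁻¹) * u / (v - u)) + ((q - q⁻¹) * v / (u - v))) • B.T i
        + (-((q - q⁻¹) * ρ⁻¹)
            + ((q - q⁻¹) * v / (v + ρ * q * u)) * ρ⁻¹
            + ((q - q⁻¹) * u / (v - u)) * ((q - q⁻¹) * v / (v + ρ * q * u))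
            + ((q - q⁻¹) * u / (u + ρ * q * v)) * ρ⁻¹
            + ((q - q⁻¹) * u / (u + ρ * q * v)) * ((q - q⁻¹) * v / (u - v))
            + ((q - q⁻¹) * u / (u + ρ * q * v)) * ((q - q⁻¹) * v / (v + ρ * q * u)) * δ 0)
            • B.E i := by
    simp only [mul_add, add_mul, smul_mul_assoc, mul_smul_comm, one_mul, mul_one,
      htt, hte, het, hee, smul_smul, smul_add, smul_sub]
    module
  rw [expand]
  have hβ : ((q - q⁻¹) + ((q - q⁻¹) * u / (v - u)) + ((q - q⁻¹) * v / (u - v))) = 0 := by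
    field_simp
    ring
  have hγ : (-((q - q⁻¹) * ρ⁻¹)
      + ((q - q⁻¹) * v / (v + ρ * q * u)) * ρ⁻¹
      + ((q - q⁻¹) * u / (v - u)) * ((q - q⁻¹) * v / (v + ρ * q * u))
      + ((q - q⁻¹) * u / (u + ρ * q * v)) * ρ⁻¹
      + ((q - q⁻¹) * u / (u + ρ * q * v)) * ((q - q⁻¹) * v / (u - v))
      + ((q - q⁻¹) * u / (u + ρ * q * v)) * ((q - q⁻¹) * v / (v + ρ * q * u)) * δ 0) = 0 := by
    have hcδ : (q - q⁻¹) * δ 0 = ρ - ρ⁻¹ + (q - q⁻¹) := by linear_combination -hparam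
    have step : ((q - q⁻¹) * u / (u + ρ * q * v)) * ((q - q⁻¹) * v / (v + ρ * q * u)) * δ 0
        = (u / (u + ρ * q * v)) * ((q - q⁻¹) * v / (v + ρ * q * u)) * ((q - q⁻¹) * δ 0) := by
      ring
    rw [step, hcδ]
    have hD : (v - u) * ((u + ρ * q * v) * (v + ρ * q * u)) ≠ 0 :=
      mul_ne_zero hvu (mul_ne_zero h1 h2)
    rw [show -((q - q⁻¹) * ρ⁻¹) = (-((q - q⁻¹) * ρ⁻¹) * ((v - u) * ((u + ρ * q * v) * (v + ρ * q * u)))) / ((v - u) * ((u + ρ * q * v) * (v + ρ * q * u))) from (mul_div_cancel_right₀ _ hD).symm,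
      show ((q - q⁻¹) * v / (v + ρ * q * u)) * ρ⁻¹ = ((q - q⁻¹) * v * ρ⁻¹ * ((v - u) * (u + ρ * q * v))) / ((v - u) * ((u + ρ * q * v) * (v + ρ * q * u))) by
        rw [div_mul_eq_mul_div, div_eq_div_iff h2 hD]; ring,
      show ((q - q⁻¹) * u / (v - u)) * ((q - q⁻¹) * v / (v + ρ * q * u)) = ((q - q⁻¹) * u * ((q - q⁻¹) * v) * (u + ρ * q * v)) / ((v - u) * ((u + ρ * q * v) * (v + ρ * q * u))) by
        rw [div_mul_div_comm, div_eq_div_iff (mul_ne_zero hvu h2) hD]; ring,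
      show ((q - q⁻¹) * u / (u + ρ * q * v)) * ρ⁻¹ = ((q - q⁻¹) * u * ρ⁻¹ * ((v - u) * (v + ρ * q * u))) / ((v - u) * ((u + ρ * q * v) * (v + ρ * q * u))) by
        rw [div_mul_eq_mul_div, div_eq_div_iff h1 hD]; ring,
      show ((q - q⁻¹) * u / (u + ρ * q * v)) * ((q - q⁻¹) * v / (u - v)) = (-((q - q⁻¹) * u * ((q - q⁻¹) * v) * (v + ρ * q * u))) / ((v - u) * ((u + ρ * q * v) * (v + ρ * q * u))) by
        rw [div_mul_div_comm, div_eq_div_iff (mul_ne_zero h1 huv') hD]; ring,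
      show (u / (u + ρ * q * v)) * ((q - q⁻¹) * v / (v + ρ * q * u)) * (ρ - ρ⁻¹ + (q - q⁻¹)) = (u * ((q - q⁻¹) * v) * (ρ - ρ⁻¹ + (q - q⁻¹)) * (v - u)) / ((v - u) * ((u + ρ * q * v) * (v + ρ * q * u))) by
        rw [div_mul_div_comm, div_mul_eq_mul_div, div_eq_div_iff (mul_ne_zero h1 h2) hD]; ring,
      ← add_div, ← add_div, ← add_div, ← add_div, ← add_div,
      div_eq_zero_iff]
    left
    have hQ : q * q⁻¹ = 1 := mul_inv_cancel₀ hq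
    have hR : ρ * ρ⁻¹ = 1 := mul_inv_cancel₀ hrho
    linear_combination (u * v * (v - u) * ρ * (q⁻¹ - 2 * q + q * ρ * ρ⁻¹)) * hQ
      + (u * v * (v - u) * ρ * q * (1 - q ^ 2)) * hR
  have hα : 1 + ((q - q⁻¹) * u / (v - u)) * ((q - q⁻¹) * v / (u - v))
      = (u - q ^ 2 * v) * (u - (q⁻¹) ^ 2 * v) / (u - v) ^ 2 := by
    field_simp
    ring
  rw [hβ, hγ, hα, zero_smul, zero_smul, add_zero, add_zero]
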